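/- Every nonlinear null curve in Q³ has degree at least 4 (in particular there are no nonlinear null curves of degree 2 or 3), and every nonlinear null curve of degree exactly 4 is unbranched: if G : Fin 5 → ℂ[X] is a null curve with gcd(G₀,…,G₄) = 1 whose components span a ℂ-subspace of dimension at least 3, then d := max_a natDegree(G_a) ≥ 4; moreover if d = 4 then the ten minors G_a·G_b' − G_b·G_a' have gcd 1 and maximal degree 6. -/

import Mathlib

open Polynomial

/-- A tuple `G : Fin 5 → ℂ[X]` is a null curve in the quadric
`Q³ = {X₀X₄ = X₁² + X₂² + X₃²} ⊂ P⁴`. -/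
def IsNullCurve (G : Fin 5 → ℂ[X]) : Prop :=
  G 0 * G 4 - G 1 ^ 2 - G 2 ^ 2 - G 3 ^ 2 = 0 ∧
  derivative (G 0) * derivative (G 4) - derivative (G 1) ^ 2 -
    derivative (G 2) ^ 2 - derivative (G 3) ^ 2 = 0

/-- The set of ordered index pairs `a < b` in `Fin 5`. -/
def pairs5 : Finset (Fin 5 × Fin 5) := Finset.univ.filter (fun p => p.1 < p.2)

/-- The minor `G_a·G_b' − G_b·G_a'`. -/
noncomputable def minor5 (G : Fin 5 → ℂ[X]) (p : Fin 5 × Fin 5) : ℂ[X] :=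
  G p.1 * derivative (G p.2) - G p.2 * derivative (G p.1)

namespace NullAux

/-- The symmetric bilinear form of the quadric, over any commutative ring. -/
def Bp {R : Type*} [CommRing R] (u v : Fin 5 → R) : R :=
  u 0 * v 4 + u 4 * v 0 - 2 * (u 1 * v 1 + u 2 * v 2 + u 3 * v 3)

theorem Bp_comm {R : Type*} [CommRing R] (u v : Fin 5 → R) : Bp u v = Bp v u := by
  simp only [Bp]; ring

theorem Bp_zero_right {R : Type*} [CommRing R] (u : Fin 5 → R) (v : Fin 5 → R)
    (hv : ∀ a, v a = 0) : Bp u v = 0 := by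
  simp only [Bp, hv]; ring

theorem Bp_deriv (u v : Fin 5 → ℂ[X]) :
    derivative (Bp u v) = Bp (fun a => derivative (u a)) v + Bp u (fun a => derivative (v a)) := by
  simp only [Bp, derivative_sub, derivative_add, derivative_mul, derivative_ofNat]
  ring

theorem Bp_coeff_zero (u v : Fin 5 → ℂ[X]) :
    (Bp u v).coeff 0 = Bp (fun a => (u a).coeff 0) (fun a => (v a).coeff 0) := by
  simp only [Bp, coeff_sub, coeff_add, mul_coeff_zero, coeff_ofNat_mul]

theorem Bp_eval (t : ℂ) (u v : Fin 5 → ℂ[X]) :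
    eval t (Bp u v) = Bp (fun a => eval t (u a)) (fun a => eval t (v a)) := by
  simp only [Bp, eval_sub, eval_add, eval_mul, eval_ofNat]

theorem Bp_smul_left {R : Type*} [CommRing R] (s : R) (u v : Fin 5 → R) :
    Bp (fun a => s * u a) v = s * Bp u v := by
  simp only [Bp]; ring

theorem Bp_add_smul_left {R : Type*} [CommRing R] (α β : R) (u w v : Fin 5 → R) :
    Bp (fun a => α * u a + β * w a) v = α * Bp u v + β * Bp w v := by
  simp only [Bp]; ring

/-- The bilinear form as a `BilinForm`. -/
noncomputable def Bf : LinearMap.BilinForm ℂ (Fin 5 → ℂ) :=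
  LinearMap.mk₂ ℂ Bp
    (fun u u' v => by simp only [Bp, Pi.add_apply]; ring)
    (fun s u v => by simp only [Bp, Pi.smul_apply, smul_eq_mul]; ring)
    (fun u v v' => by simp only [Bp, Pi.add_apply]; ring)
    (fun s u v => by simp only [Bp, Pi.smul_apply, smul_eq_mul]; ring)

theorem Bf_apply (u v : Fin 5 → ℂ) : Bf u v = Bp u v := rfl

theorem Bf_isRefl : Bf.IsRefl := fun u v h => by
  rwa [Bf_apply, Bp_comm, ← Bf_apply]

theorem Bf_nondegenerate : Bf.Nondegenerate := by
  refine LinearMap.BilinForm.Nondegenerate.ofSeparatingLeft ?_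
  intro x hx
  funext i
  have h0 := hx (fun j => if j = 0 then 1 else 0)
  have h1 := hx (fun j => if j = 1 then 1 else 0)
  have h2 := hx (fun j => if j = 2 then 1 else 0)
  have h3 := hx (fun j => if j = 3 then 1 else 0)
  have h4 := hx (fun j => if j = 4 then 1 else 0)
  simp only [Bf_apply, Bp] at h0 h1 h2 h3 h4
  norm_num at h0 h1 h2 h3 h4
  fin_cases i <;> simp_all

/-- A totally isotropic subspace of our rank-5 form has dimension at most 2. -/
theorem isotropic_finrank_le (c : Fin 5 → (Fin 5 → ℂ))
    (h : ∀ j k, Bp (c j) (c k) = 0) :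
    Module.finrank ℂ (Submodule.span ℂ (Set.range c)) ≤ 2 := by
  set W := Submodule.span ℂ (Set.range c) with hW
  have hWle : W ≤ Bf.orthogonal W := by
    intro x hx
    rw [LinearMap.BilinForm.mem_orthogonal_iff]
    intro y hy
    refine Submodule.span_induction ?_ ?_ ?_ ?_ hy
    · rintro y ⟨j, rfl⟩
      refine Submodule.span_induction ?_ ?_ ?_ ?_ hx
      · rintro x ⟨k, rfl⟩
        exact h j k
      · simp [LinearMap.BilinForm.IsOrtho]
      · intro a b _ _ ha hb
        simp only [LinearMap.BilinForm.IsOrtho, map_add] at *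
        simp [ha, hb]
      · intro s a _ ha
        simp only [LinearMap.BilinForm.IsOrtho, map_smul] at *
        simp [ha]
    · simp [LinearMap.BilinForm.IsOrtho]
    · intro a b _ _ ha hb
      simp [LinearMap.map_add, ha, hb]
    · intro s a _ ha
      simp [LinearMap.map_smul, ha]
  have hfin := LinearMap.BilinForm.finrank_orthogonal Bf_nondegenerate W
  have hle : Module.finrank ℂ W ≤ Module.finrank ℂ (Bf.orthogonal W) :=
    Submodule.finrank_mono hWle
  have h5 : Module.finrank ℂ (Fin 5 → ℂ) = 5 := by simp
  have hW5 : Module.finrank ℂ W ≤ 5 := by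
    have := Submodule.finrank_le W
    omega
  omega


/-- If the coefficient vectors are totally isotropic, the components span a
subspace of dimension at most 2. -/
theorem span_G_finrank_le_two (G : Fin 5 → ℂ[X]) (hdeg : ∀ a, (G a).natDegree ≤ 4)
    (h : ∀ j k : Fin 5, Bp (fun a => (G a).coeff (j : ℕ)) (fun a => (G a).coeff (k : ℕ)) = 0) :
    Module.finrank ℂ (Submodule.span ℂ (Set.range G)) ≤ 2 := by
  classical
  set c : Fin 5 → (Fin 5 → ℂ) := fun j a => (G a).coeff (j : ℕ) with hc
  have hWfin : Module.finrank ℂ (Submodule.span ℂ (Set.range c)) ≤ 2 :=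
    isotropic_finrank_le c h
  set W := Submodule.span ℂ (Set.range c) with hWdef
  have : FiniteDimensional ℂ W := FiniteDimensional.span_of_finite ℂ (Set.finite_range c)
  set n := Module.finrank ℂ W with hn
  let b : Module.Basis (Fin n) ℂ W := Module.finBasis ℂ W
  have hmem : ∀ j : Fin 5, c j ∈ W := fun j => Submodule.subset_span ⟨j, rfl⟩
  set w : Fin 5 → W := fun j => ⟨c j, hmem j⟩ with hw
  set P : Fin n → ℂ[X] := fun i => ∑ j : Fin 5, C (b.repr (w j) i) * X ^ (j : ℕ) with hP
  have hckey : ∀ (j : Fin 5) (a : Fin 5),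
      c j a = ∑ i : Fin n, b.repr (w j) i * ((b i : Fin 5 → ℂ) a) := by
    intro j a
    have := b.sum_repr (w j)
    have h2 : ((∑ i : Fin n, b.repr (w j) i • b i : W) : Fin 5 → ℂ) a
        = ((w j : W) : Fin 5 → ℂ) a := by rw [this]
    simpa [-Module.Basis.sum_repr] using h2.symm
  have hGa : ∀ a : Fin 5, G a = ∑ i : Fin n, C ((b i : Fin 5 → ℂ) a) * P i := by
    intro a
    have hexp : G a = ∑ j : Fin 5, C (c j a) * X ^ (j : ℕ) := by
      conv_lhs => rw [(G a).as_sum_range' 5 (lt_of_le_of_lt (hdeg a) (by norm_num))]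
      rw [← Fin.sum_univ_eq_sum_range (fun j => monomial j ((G a).coeff j)) 5]
      refine Finset.sum_congr rfl fun j _ => ?_
      rw [← C_mul_X_pow_eq_monomial]
    rw [hexp]
    simp only [hP, Finset.mul_sum]
    rw [Finset.sum_comm]
    refine Finset.sum_congr rfl fun j _ => ?_
    rw [hckey j a]
    rw [map_sum, Finset.sum_mul]
    refine Finset.sum_congr rfl fun i _ => ?_
    rw [map_mul]
    ring
  have hsub : Submodule.span ℂ (Set.range G) ≤ Submodule.span ℂ (Set.range P) := by
    rw [Submodule.span_le]
    rintro _ ⟨a, rfl⟩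
    rw [hGa a]
    have : (∑ i : Fin n, ((b i : Fin 5 → ℂ) a) • P i) ∈ Submodule.span ℂ (Set.range P) :=
      Submodule.sum_smul_mem _ _ fun i _ => Submodule.subset_span ⟨i, rfl⟩
    simpa [Polynomial.smul_eq_C_mul] using this
  have hfinP : FiniteDimensional ℂ (Submodule.span ℂ (Set.range P)) :=
    FiniteDimensional.span_of_finite ℂ (Set.finite_range P)
  have h1 : Module.finrank ℂ (Submodule.span ℂ (Set.range G)) ≤
      Module.finrank ℂ (Submodule.span ℂ (Set.range P)) := Submodule.finrank_mono hsub
  have h2 : Module.finrank ℂ (Submodule.span ℂ (Set.range P)) ≤ n := by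
    have := finrank_range_le_card (R := ℂ) P
    simpa [Set.finrank] using this
  omega

/-- The chain of orthogonality relations between the derivatives of a null curve. -/
theorem chain (g0 g1 g2 g3 g4 g5 : Fin 5 → ℂ[X])
    (e1 : g1 = fun a => derivative (g0 a)) (e2 : g2 = fun a => derivative (g1 a))
    (e3 : g3 = fun a => derivative (g2 a)) (e4 : g4 = fun a => derivative (g3 a))
    (e5 : g5 = fun a => derivative (g4 a))
    (h5 : ∀ a, g5 a = 0)
    (q0 : Bp g0 g0 = 0) (q1 : Bp g1 g1 = 0) :
    ∃ ρ : ℂ,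
      Bp g0 g1 = 0 ∧ Bp g0 g2 = 0 ∧ Bp g1 g2 = 0 ∧ Bp g0 g3 = 0 ∧
      Bp g2 g2 = C ρ ∧ Bp g1 g3 = -C ρ ∧ Bp g0 g4 = C ρ ∧
      Bp g1 g4 = 0 ∧ Bp g2 g3 = 0 ∧ Bp g2 g4 = 0 ∧ Bp g3 g3 = 0 ∧
      Bp g3 g4 = 0 ∧ Bp g4 g4 = 0 := by
  have two_ne : (2 : ℂ[X]) ≠ 0 := by norm_num
  have five_ne : (5 : ℂ[X]) ≠ 0 := by norm_num
  -- zero pairings with g5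
  have b05 : Bp g0 g5 = 0 := by simp [Bp, h5]
  have b15 : Bp g1 g5 = 0 := by simp [Bp, h5]
  have b25 : Bp g2 g5 = 0 := by simp [Bp, h5]
  have b35 : Bp g3 g5 = 0 := by simp [Bp, h5]
  -- step 1
  have b01 : Bp g0 g1 = 0 := by
    have e := congrArg derivative q0
    rw [derivative_zero, Bp_deriv, ← e1, Bp_comm g1 g0] at e
    have h2 : (2 : ℂ[X]) * Bp g0 g1 = 0 := by linear_combination e
    exact (mul_eq_zero.mp h2).resolve_left two_ne
  have b12 : Bp g1 g2 = 0 := by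
    have e := congrArg derivative q1
    rw [derivative_zero, Bp_deriv, ← e2, Bp_comm g2 g1] at e
    have h2 : (2 : ℂ[X]) * Bp g1 g2 = 0 := by linear_combination e
    exact (mul_eq_zero.mp h2).resolve_left two_ne
  have b02 : Bp g0 g2 = 0 := by
    have e := congrArg derivative b01
    rw [derivative_zero, Bp_deriv, ← e1, ← e2] at e
    linear_combination e - q1
  have b03 : Bp g0 g3 = 0 := by
    have e := congrArg derivative b02
    rw [derivative_zero, Bp_deriv, ← e1, ← e3] at e
    linear_combination e - b12
  have b13 : Bp g1 g3 = -Bp g2 g2 := by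
    have e := congrArg derivative b12
    rw [derivative_zero, Bp_deriv, ← e2, ← e3] at e
    linear_combination e
  have b04 : Bp g0 g4 = Bp g2 g2 := by
    have e := congrArg derivative b03
    rw [derivative_zero, Bp_deriv, ← e1, ← e4] at e
    linear_combination e - b13
  -- derivative of r
  have dr : derivative (Bp g2 g2) = 2 * Bp g2 g3 := by
    rw [Bp_deriv, ← e3]
    linear_combination Bp_comm g3 g2
  have b14 : Bp g1 g4 = derivative (Bp g2 g2) := by
    have e := congrArg derivative b04
    rw [Bp_deriv, ← e1, ← e5] at e
    linear_combination e - b05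
  have b23 : Bp g2 g3 = -2 * derivative (Bp g2 g2) := by
    have e := congrArg derivative b13
    rw [Bp_deriv, ← e2, ← e4, derivative_neg] at e
    linear_combination e - b14
  have dr0 : derivative (Bp g2 g2) = 0 := by
    have h5' : (5 : ℂ[X]) * derivative (Bp g2 g2) = 0 := by
      linear_combination dr + 2 * b23
    exact (mul_eq_zero.mp h5').resolve_left five_ne
  have b14' : Bp g1 g4 = 0 := by rw [b14, dr0]
  have b23' : Bp g2 g3 = 0 := by rw [b23, dr0]; ring
  have b24 : Bp g2 g4 = 0 := by
    have e := congrArg derivative b14'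
    rw [derivative_zero, Bp_deriv, ← e2, ← e5] at e
    linear_combination e - b15
  have b33 : Bp g3 g3 = 0 := by
    have e := congrArg derivative b23'
    rw [derivative_zero, Bp_deriv, ← e3, ← e4] at e
    linear_combination e - b24
  have b34 : Bp g3 g4 = 0 := by
    have e := congrArg derivative b24
    rw [derivative_zero, Bp_deriv, ← e3, ← e5] at e
    linear_combination e - b25
  have b44 : Bp g4 g4 = 0 := by
    have e := congrArg derivative b34
    rw [derivative_zero, Bp_deriv, ← e4, ← e5] at e
    linear_combination e - b35
  have hC : Bp g2 g2 = C ((Bp g2 g2).coeff 0) := eq_C_of_derivative_eq_zero dr0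
  exact ⟨(Bp g2 g2).coeff 0, b01, b02, b12, b03, hC, by rw [← hC]; exact b13,
    by rw [← hC]; exact b04, b14', b23', b24, b33, b34, b44⟩

theorem Bp_smul_smul {R : Type*} [CommRing R] (s t : R) (u v : Fin 5 → R) :
    Bp (fun a => s * u a) (fun a => t * v a) = s * t * Bp u v := by
  simp only [Bp]; ring

/-- Extract orthogonality of coefficient vectors from orthogonality of derivatives. -/
theorem coeff_orth (g : Fin 5 → ℂ[X]) (j k : ℕ)
    (h : Bp (fun a => derivative^[j] (g a)) (fun a => derivative^[k] (g a)) = 0) :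
    Bp (fun a => (g a).coeff j) (fun a => (g a).coeff k) = 0 := by
  have h0 : (Bp (fun a => derivative^[j] (g a)) (fun a => derivative^[k] (g a))).coeff 0 = 0 := by
    rw [h]; simp
  rw [Bp_coeff_zero] at h0
  have hj : ∀ a : Fin 5, (derivative^[j] (g a)).coeff 0 = (j.factorial : ℂ) * (g a).coeff j := by
    intro a
    rw [coeff_iterate_derivative, zero_add, Nat.descFactorial_self, nsmul_eq_mul]
  have hk : ∀ a : Fin 5, (derivative^[k] (g a)).coeff 0 = (k.factorial : ℂ) * (g a).coeff k := by
    intro a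
    rw [coeff_iterate_derivative, zero_add, Nat.descFactorial_self, nsmul_eq_mul]
  simp only [hj, hk] at h0
  rw [Bp_smul_smul] at h0
  rcases mul_eq_zero.mp h0 with h1 | h1
  · exfalso
    rcases mul_eq_zero.mp h1 with h2 | h2 <;>
      exact Nat.cast_ne_zero.mpr (Nat.factorial_ne_zero _) h2
  · exact h1

/-- All 2×2 minors vanish implies linear dependence. -/
theorem dep_of_minors (v0 v1 : Fin 5 → ℂ)
    (h : ∀ a b : Fin 5, v0 a * v1 b - v0 b * v1 a = 0) :
    ∃ α β : ℂ, ¬(α = 0 ∧ β = 0) ∧ ∀ a, α * v0 a + β * v1 a = 0 := by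
  by_cases hv : ∀ a, v0 a = 0
  · exact ⟨1, 0, by simp, fun a => by simp [hv a]⟩
  · push_neg at hv
    obtain ⟨a0, ha0⟩ := hv
    refine ⟨v1 a0, -v0 a0, fun hc => ha0 (by simpa using hc.2), fun a => ?_⟩
    have := h a0 a
    linear_combination -this

/-- Degree bound for the Wronskian-type minors. -/
theorem minor_natDegree_le (p q : ℂ[X]) (hp : p.natDegree ≤ 4) (hq : q.natDegree ≤ 4) :
    (p * derivative q - q * derivative p).natDegree ≤ 6 := by
  rw [natDegree_le_iff_coeff_eq_zero]
  intro N hN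
  rw [coeff_sub, coeff_mul, coeff_mul, ← Finset.sum_sub_distrib]
  apply Finset.sum_eq_zero
  rintro ⟨i, j⟩ hij
  rw [Finset.HasAntidiagonal.mem_antidiagonal] at hij
  rw [coeff_derivative, coeff_derivative]
  rcases Nat.lt_or_ge i 5 with hi | hi
  · rcases Nat.lt_or_ge j 4 with hj' | hj'
    · -- i ≤ 4, j ≤ 3 forces i = 4, j = 3, N = 7 > 6 impossible unless N = 7
      have hi4 : i = 4 := by omega
      have hj3 : j = 3 := by omega
      subst hi4; subst hj3
      ring
    · have h1 : q.coeff (j + 1) = 0 := coeff_eq_zero_of_natDegree_lt (by omega)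
      have h2 : p.coeff (j + 1) = 0 := coeff_eq_zero_of_natDegree_lt (by omega)
      rw [h1, h2]; ring
  · have h1 : p.coeff i = 0 := coeff_eq_zero_of_natDegree_lt (by omega)
    have h2 : q.coeff i = 0 := coeff_eq_zero_of_natDegree_lt (by omega)
    rw [h1, h2]; ring

/-- The top (degree-6) coefficient of a minor. -/
theorem coeff6_minor (p q : ℂ[X]) (hp : p.natDegree ≤ 4) (hq : q.natDegree ≤ 4) :
    (p * derivative q - q * derivative p).coeff 6
      = p.coeff 3 * q.coeff 4 - p.coeff 4 * q.coeff 3 := by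
  have hp' : ∀ m, 4 < m → p.coeff m = 0 := fun m hm =>
    coeff_eq_zero_of_natDegree_lt (lt_of_le_of_lt hp hm)
  have hq' : ∀ m, 4 < m → q.coeff m = 0 := fun m hm =>
    coeff_eq_zero_of_natDegree_lt (lt_of_le_of_lt hq hm)
  rw [coeff_sub, coeff_mul, coeff_mul,
    Finset.Nat.sum_antidiagonal_eq_sum_range_succ_mk,
    Finset.Nat.sum_antidiagonal_eq_sum_range_succ_mk]
  simp only [Finset.sum_range_succ, Finset.sum_range_zero, coeff_derivative]
  norm_num
  rw [hp' 5 (by norm_num), hp' 6 (by norm_num), hq' 5 (by norm_num), hq' 6 (by norm_num),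
    hq' 7 (by norm_num), hp' 7 (by norm_num)]
  ring

end NullAux
set_option maxHeartbeats 1000000

open NullAux

/-- Every nonlinear null curve in `Q³` has degree at least `4`, and a nonlinear 
null curve of degree exactly `4` is unbranched. -/
theorem nonlinear_null_curve_degree_ge_four (G : Fin 5 → ℂ[X])
    (hnull : IsNullCurve G)
    (hgcd : Finset.univ.gcd G = 1)
    (hspan : 3 ≤ Module.finrank ℂ ↥(Submodule.span ℂ (Set.range G))) :
    4 ≤ Finset.univ.sup (fun a => (G a).natDegree) ∧
    (Finset.univ.sup (fun a => (G a).natDegree) = 4 →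
      pairs5.gcd (minor5 G) = 1 ∧
      pairs5.sup (fun p => (minor5 G p).natDegree) = 6) := by
  classical
  have q0 : Bp G G = 0 := by
    have h := hnull.1
    simp only [Bp]
    linear_combination 2 * h
  have q1 : Bp (fun a => derivative^[1] (G a)) (fun a => derivative^[1] (G a)) = 0 := by
    have h := hnull.2
    simp only [Bp, Function.iterate_one]
    linear_combination 2 * h
  -- Part 1: degree at least 4
  have part1 : 4 ≤ Finset.univ.sup (fun a => (G a).natDegree) := by
    by_contra hlt
    push_neg at hlt
    have hdeg : ∀ a, (G a).natDegree ≤ 3 := by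
      intro a
      have h2 : (G a).natDegree ≤ Finset.univ.sup (fun a => (G a).natDegree) :=
        Finset.le_sup (f := fun a => (G a).natDegree) (Finset.mem_univ a)
      omega
    have hD4 : ∀ a, derivative^[4] (G a) = 0 := fun a =>
      iterate_derivative_eq_zero (by have := hdeg a; omega)
    have hD5 : ∀ a, derivative^[5] (G a) = 0 := fun a =>
      iterate_derivative_eq_zero (by have := hdeg a; omega)
    obtain ⟨ρ, b01, b02, b12, b03, b22, b13, b04, b14, b23, b24, b33, b34, b44⟩ :=
      chain G (fun a => derivative^[1] (G a)) (fun a => derivative^[2] (G a))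
        (fun a => derivative^[3] (G a)) (fun a => derivative^[4] (G a))
        (fun a => derivative^[5] (G a))
        (funext fun a => Function.iterate_succ_apply' derivative 0 (G a))
        (funext fun a => Function.iterate_succ_apply' derivative 1 (G a))
        (funext fun a => Function.iterate_succ_apply' derivative 2 (G a))
        (funext fun a => Function.iterate_succ_apply' derivative 3 (G a))
        (funext fun a => Function.iterate_succ_apply' derivative 4 (G a))
        hD5 q0 q1
    have hρ : ρ = 0 := by
      have h0 : Bp G (fun a => derivative^[4] (G a)) = 0 := Bp_zero_right _ _ hD4
      rw [b04] at h0
      exact C_eq_zero.mp h0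
    rw [hρ, map_zero] at b22 b13 b04
    rw [neg_zero] at b13
    have horth : ∀ j k : ℕ, j ≤ 4 → k ≤ 4 →
        Bp (fun a => derivative^[j] (G a)) (fun a => derivative^[k] (G a)) = 0 := by
      intro j k hj hk
      interval_cases j <;> interval_cases k
      · exact q0
      · exact b01
      · exact b02
      · exact b03
      · exact b04
      · rw [Bp_comm]; exact b01
      · exact q1
      · exact b12
      · exact b13
      · exact b14
      · rw [Bp_comm]; exact b02
      · rw [Bp_comm]; exact b12
      · exact b22
      · exact b23
      · exact b24
      · rw [Bp_comm]; exact b03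
      · rw [Bp_comm]; exact b13
      · rw [Bp_comm]; exact b23
      · exact b33
      · exact b34
      · rw [Bp_comm]; exact b04
      · rw [Bp_comm]; exact b14
      · rw [Bp_comm]; exact b24
      · rw [Bp_comm]; exact b34
      · exact b44
    have hle2 := span_G_finrank_le_two G (fun a => le_trans (hdeg a) (by norm_num))
      (fun j k => coeff_orth G j k (horth j k (Fin.is_le j) (Fin.is_le k)))
    omega
  refine ⟨part1, fun hd4 => ?_⟩
  -- Part 2: degree exactly 4
  have hdeg : ∀ a, (G a).natDegree ≤ 4 := by
    intro a
    have h2 : (G a).natDegree ≤ Finset.univ.sup (fun a => (G a).natDegree) :=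
      Finset.le_sup (f := fun a => (G a).natDegree) (Finset.mem_univ a)
    omega
  have hD5 : ∀ a, derivative^[5] (G a) = 0 := fun a =>
    iterate_derivative_eq_zero (by have := hdeg a; omega)
  obtain ⟨ρ, b01, b02, b12, b03, b22, b13, b04, b14, b23, b24, b33, b34, b44⟩ :=
    chain G (fun a => derivative^[1] (G a)) (fun a => derivative^[2] (G a))
      (fun a => derivative^[3] (G a)) (fun a => derivative^[4] (G a))
      (fun a => derivative^[5] (G a))
      (funext fun a => Function.iterate_succ_apply' derivative 0 (G a))
      (funext fun a => Function.iterate_succ_apply' derivative 1 (G a))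
      (funext fun a => Function.iterate_succ_apply' derivative 2 (G a))
      (funext fun a => Function.iterate_succ_apply' derivative 3 (G a))
      (funext fun a => Function.iterate_succ_apply' derivative 4 (G a))
      hD5 q0 q1
  have hρ : ρ ≠ 0 := by
    intro hρ0
    rw [hρ0, map_zero] at b22 b13 b04
    rw [neg_zero] at b13
    have horth : ∀ j k : ℕ, j ≤ 4 → k ≤ 4 →
        Bp (fun a => derivative^[j] (G a)) (fun a => derivative^[k] (G a)) = 0 := by
      intro j k hj hk
      interval_cases j <;> interval_cases k
      · exact q0
      · exact b01
      · exact b02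
      · exact b03
      · exact b04
      · rw [Bp_comm]; exact b01
      · exact q1
      · exact b12
      · exact b13
      · exact b14
      · rw [Bp_comm]; exact b02
      · rw [Bp_comm]; exact b12
      · exact b22
      · exact b23
      · exact b24
      · rw [Bp_comm]; exact b03
      · rw [Bp_comm]; exact b13
      · rw [Bp_comm]; exact b23
      · exact b33
      · exact b34
      · rw [Bp_comm]; exact b04
      · rw [Bp_comm]; exact b14
      · rw [Bp_comm]; exact b24
      · rw [Bp_comm]; exact b34
      · exact b44
    have hle2 := span_G_finrank_le_two G hdeg
      (fun j k => coeff_orth G j k (horth j k (Fin.is_le j) (Fin.is_le k)))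
    omega
  -- key: at every point some minor is nonzero
  have key : ∀ t : ℂ, ∃ p ∈ pairs5, eval t (minor5 G p) ≠ 0 := by
    intro t
    by_contra hK
    push_neg at hK
    have hm : ∀ a b : Fin 5,
        eval t (G a) * eval t (derivative^[1] (G b))
          - eval t (G b) * eval t (derivative^[1] (G a)) = 0 := by
      have hval : ∀ a b : Fin 5, a < b →
          eval t (G a) * eval t (derivative^[1] (G b))
            - eval t (G b) * eval t (derivative^[1] (G a)) = 0 := by
        intro a b hab
        have hp : (a, b) ∈ pairs5 := by simp [pairs5, hab]
        have h := hK (a, b) hp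
        simp only [minor5, eval_sub, eval_mul] at h
        simpa [Function.iterate_one] using h
      intro a b
      rcases lt_trichotomy a b with h | h | h
      · exact hval a b h
      · rw [h]; ring
      · have := hval b a h; linear_combination -this
    obtain ⟨α, β, hne, hlin⟩ := dep_of_minors (fun a => eval t (G a))
      (fun a => eval t (derivative^[1] (G a))) hm
    have E04 : Bp (fun a => eval t (G a)) (fun a => eval t (derivative^[4] (G a))) = ρ := by
      have h := congrArg (eval t) b04
      rw [Bp_eval] at h
      simpa using h
    have E13 : Bp (fun a => eval t (derivative^[1] (G a)))
        (fun a => eval t (derivative^[3] (G a))) = -ρ := by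
      have h := congrArg (eval t) b13
      rw [Bp_eval] at h
      simpa using h
    have E03 : Bp (fun a => eval t (G a)) (fun a => eval t (derivative^[3] (G a))) = 0 := by
      have h := congrArg (eval t) b03
      rw [Bp_eval] at h
      simpa using h
    have E14 : Bp (fun a => eval t (derivative^[1] (G a)))
        (fun a => eval t (derivative^[4] (G a))) = 0 := by
      have h := congrArg (eval t) b14
      rw [Bp_eval] at h
      simpa using h
    have hz : ∀ v : Fin 5 → ℂ,
        Bp (fun a => α * eval t (G a) + β * eval t (derivative^[1] (G a))) v = 0 := by
      intro v
      rw [Bp_comm]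
      exact Bp_zero_right _ _ hlin
    have hα : α = 0 := by
      have h := hz (fun a => eval t (derivative^[4] (G a)))
      rw [Bp_add_smul_left, E04, E14] at h
      have : α * ρ = 0 := by linear_combination h
      exact (mul_eq_zero.mp this).resolve_right hρ
    have hβ : β = 0 := by
      have h := hz (fun a => eval t (derivative^[3] (G a)))
      rw [Bp_add_smul_left, E03, E13] at h
      have : β * ρ = 0 := by linear_combination -h
      exact (mul_eq_zero.mp this).resolve_right hρ
    exact hne ⟨hα, hβ⟩
  constructor
  · -- gcd of the minors is 1
    have hg0 : pairs5.gcd (minor5 G) ≠ 0 := by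
      intro h0
      rw [Finset.gcd_eq_zero_iff] at h0
      obtain ⟨p, hp, hne2⟩ := key 0
      exact hne2 (by rw [h0 p hp]; simp)
    have hnoroot : ∀ z : ℂ, ¬ (pairs5.gcd (minor5 G)).IsRoot z := by
      intro z hz
      obtain ⟨p, hp, hne2⟩ := key z
      obtain ⟨q, hq⟩ := Finset.gcd_dvd (f := minor5 G) hp
      apply hne2
      rw [hq, eval_mul, hz.eq_zero, zero_mul]
    have hdeg0 : (pairs5.gcd (minor5 G)).natDegree = 0 := by
      by_contra hd
      have hdpos : 0 < (pairs5.gcd (minor5 G)).degree :=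
        natDegree_pos_iff_degree_pos.mp (Nat.pos_of_ne_zero hd)
      obtain ⟨z, hz⟩ := Complex.exists_root hdpos
      exact hnoroot z hz
    have hmonic : (pairs5.gcd (minor5 G)).Monic := by
      have h := Polynomial.monic_normalize (p := pairs5.gcd (minor5 G)) hg0
      rwa [Finset.normalize_gcd (s := pairs5) (f := minor5 G)] at h
    exact hmonic.natDegree_eq_zero.mp hdeg0
  · -- maximal degree of the minors is 6
    have hub : ∀ p ∈ pairs5, (minor5 G p).natDegree ≤ 6 := fun p _ =>
      minor_natDegree_le (G p.1) (G p.2) (hdeg _) (hdeg _)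
    have hc4ne : ¬ ∀ a : Fin 5, (G a).coeff 4 = 0 := by
      intro hall
      have hD4 : ∀ a, derivative^[4] (G a) = 0 := by
        intro a
        have h3 : (G a).natDegree ≤ 3 := by
          rw [natDegree_le_iff_coeff_eq_zero]
          intro m hm
          rcases eq_or_lt_of_le (Nat.succ_le_of_lt hm) with h | h
          · rw [← h]; exact hall a
          · exact coeff_eq_zero_of_natDegree_lt (lt_of_le_of_lt (hdeg a) h)
        exact iterate_derivative_eq_zero (by omega)
      have h0 : Bp G (fun a => derivative^[4] (G a)) = 0 := Bp_zero_right _ _ hD4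
      rw [b04] at h0
      exact hρ (C_eq_zero.mp h0)
    have hexists : ∃ p ∈ pairs5, (minor5 G p).coeff 6 ≠ 0 := by
      by_contra hno
      push_neg at hno
      have hm : ∀ a b : Fin 5,
          (G a).coeff 3 * (G b).coeff 4 - (G b).coeff 3 * (G a).coeff 4 = 0 := by
        have hval : ∀ a b : Fin 5, a < b →
            (G a).coeff 3 * (G b).coeff 4 - (G b).coeff 3 * (G a).coeff 4 = 0 := by
          intro a b hab
          have hp : (a, b) ∈ pairs5 := by simp [pairs5, hab]
          have h := hno (a, b) hp
          rw [show minor5 G (a, b) = G a * derivative (G b) - G b * derivative (G a) from rfl,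
            coeff6_minor (G a) (G b) (hdeg a) (hdeg b)] at h
          linear_combination h
        intro a b
        rcases lt_trichotomy a b with h | h | h
        · exact hval a b h
        · rw [h]; ring
        · have := hval b a h; linear_combination -this
      obtain ⟨α, β, hne, hlin⟩ := dep_of_minors (fun a => (G a).coeff 3)
        (fun a => (G a).coeff 4) hm
      have hα : α ≠ 0 := by
        intro h0
        apply hc4ne
        intro a
        have h := hlin a
        rw [h0, zero_mul, zero_add] at h
        have hβ : β ≠ 0 := fun hb => hne ⟨h0, hb⟩
        exact (mul_eq_zero.mp h).resolve_left hβ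
      have hc3 : ∀ a : Fin 5, (G a).coeff 3 = (-β / α) * (G a).coeff 4 := by
        intro a
        have h := hlin a
        rw [div_mul_eq_mul_div, eq_div_iff hα]
        linear_combination h
      have hD3 : ∀ a : Fin 5, eval (-(-β / α) / 4) (derivative^[3] (G a)) = 0 := by
        intro a
        have hnd : (derivative^[3] (G a)).natDegree ≤ 1 :=
          le_trans (natDegree_iterate_derivative _ 3) (by have := hdeg a; omega)
        have hco0 : (derivative^[3] (G a)).coeff 0 = (6 : ℂ) * (G a).coeff 3 := by
          rw [coeff_iterate_derivative]
          norm_num [nsmul_eq_mul]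
        have hco1 : (derivative^[3] (G a)).coeff 1 = (24 : ℂ) * (G a).coeff 4 := by
          rw [coeff_iterate_derivative]
          norm_num [nsmul_eq_mul]
        rw [eq_X_add_C_of_natDegree_le_one hnd, hco0, hco1]
        simp only [eval_add, eval_mul, eval_C, eval_X]
        rw [hc3 a]
        have hα4 : (α : ℂ) ≠ 0 := hα
        field_simp
        ring
      have E13 : Bp (fun a => eval (-(-β / α) / 4) (derivative^[1] (G a)))
          (fun a => eval (-(-β / α) / 4) (derivative^[3] (G a))) = -ρ := by
        have h := congrArg (eval (-(-β / α) / 4)) b13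
        rw [Bp_eval] at h
        simpa using h
      rw [Bp_zero_right _ _ hD3] at E13
      exact hρ (by linear_combination E13)
    obtain ⟨p, hp, hcne⟩ := hexists
    exact le_antisymm (Finset.sup_le hub)
      (le_trans (le_natDegree_of_ne_zero hcne) (Finset.le_sup (f := fun p => (minor5 G p).natDegree) hp))
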